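/- β-reduction on λ-terms is confluent: if a →β* b and a →β* c then there is d with b →β* d and c →β* d. -/

import Mathlib

/-- Untyped λ-terms in de Bruijn representation (terms up to α-equivalence). -/
inductive Lam : Type
  | var : Nat → Lam
  | app : Lam → Lam → Lam
  | abs : Lam → Lam
  deriving DecidableEq

namespace Lam

/-- Lift (shift up) free variables ≥ k. -/
def lift : Lam → Nat → Lam
  | var i, k => if i < k then var i else var (i + 1)
  | app s t, k => app (lift s k) (lift t k)
  | abs t, k => abs (lift t (k + 1))

/-- Capture-avoiding substitution `t[x := u]`. -/
def subst : Lam → Nat → Lam → Lam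
  | var i, k, u => if i < k then var i else if i = k then u else var (i - 1)
  | app s t, k, u => app (subst s k u) (subst t k u)
  | abs t, k, u => abs (subst t (k + 1) (lift u 0))

/-- `x` occurs free in a term. -/
def IsFree (x : Nat) : Lam → Prop
  | var i => i = x
  | app s t => IsFree x s ∨ IsFree x t
  | abs t => IsFree (x + 1) t

/-- β-reduction: the compatible closure of the β-rule. -/
inductive Beta : Lam → Lam → Prop
  | beta (t s : Lam) : Beta (app (abs t) s) (subst t 0 s)
  | appL {s s' : Lam} (t : Lam) : Beta s s' → Beta (app s t) (app s' t)
  | appR (s : Lam) {t t' : Lam} : Beta t t' → Beta (app s t) (app s t')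
  | abs {t t' : Lam} : Beta t t' → Beta (abs t) (abs t')

/-- Reflexive-transitive closure of β-reduction. -/
abbrev Betas : Lam → Lam → Prop := Relation.ReflTransGen Beta

/-- Application with built-in β-reduction at the root. -/
def appBeta : Lam → Lam → Lam
  | abs u, v => subst u 0 v
  | s, v => app s v

/-- The full-superdevelopment map. -/
def dev : Lam → Lam
  | var i => var i
  | abs t => abs (dev t)
  | app s t => appBeta (dev s) (dev t)

end Lam

namespace Lam

theorem lift_lift (t : Lam) : ∀ {i j : Nat}, i ≤ j →
    lift (lift t i) (j+1) = lift (lift t j) i := by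
  induction t with
  | var n =>
    intro i j h
    simp only [lift]
    split_ifs <;> simp only [lift] <;> split_ifs <;> first | rfl | omega
  | app s t ihs iht => intro i j h; simp only [lift, ihs h, iht h]
  | abs t ih => intro i j h; simp only [lift]; rw [ih (by omega)]

theorem lift_subst_le (t u : Lam) : ∀ {j k : Nat}, j ≤ k →
    lift (subst t k u) j = subst (lift t j) (k+1) (lift u j) := by
  induction t generalizing u with
  | var n =>
    intro j k h
    simp only [subst, lift]
    split_ifs <;> simp only [lift, subst] <;> split_ifs <;> first | rfl | omega | (congr 1; omega)
  | app s t ihs iht => intro j k h; simp only [subst, lift, ihs _ h, iht _ h]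
  | abs t ih =>
    intro j k h
    simp only [subst, lift]
    rw [ih _ (by omega), lift_lift u (Nat.zero_le j)]

theorem lift_subst_ge (t u : Lam) : ∀ {j k : Nat}, k ≤ j →
    lift (subst t k u) j = subst (lift t (j+1)) k (lift u j) := by
  induction t generalizing u with
  | var n =>
    intro j k h
    simp only [subst, lift]
    split_ifs <;> simp only [lift, subst] <;> split_ifs <;> first | rfl | omega | (congr 1; omega)
  | app s t ihs iht => intro j k h; simp only [subst, lift, ihs _ h, iht _ h]
  | abs t ih =>
    intro j k h
    simp only [subst, lift]
    rw [ih _ (by omega), lift_lift u (Nat.zero_le j)]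

theorem subst_lift (t u : Lam) (k : Nat) : subst (lift t k) k u = t := by
  induction t generalizing u k with
  | var n =>
    simp only [lift, subst]
    split_ifs <;> simp only [subst] <;> split_ifs <;> first | rfl | omega | (congr 1; omega)
  | app s t ihs iht => simp only [lift, subst, ihs, iht]
  | abs t ih => simp only [lift, subst, ih]

theorem subst_subst (t u v : Lam) : ∀ {i j : Nat}, i ≤ j →
    subst (subst t i u) j v = subst (subst t (j+1) (lift v i)) i (subst u j v) := by
  induction t generalizing u v with
  | var n =>
    intro i j h
    simp only [subst]
    split_ifs <;> (try simp only [subst]) <;> (try split_ifs) <;>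
      first | rfl | omega | (congr 1; omega) | (rw [subst_lift])
  | app s t ihs iht => intro i j h; simp only [subst, ihs _ _ h, iht _ _ h]
  | abs t ih =>
    intro i j h
    simp only [subst]
    rw [ih _ _ (by omega), lift_lift v (Nat.zero_le i), lift_subst_le u v (Nat.zero_le j)]

theorem Beta.lift {t t' : Lam} (h : Beta t t') (k : Nat) :
    Beta (Lam.lift t k) (Lam.lift t' k) := by
  induction h generalizing k with
  | beta t s =>
    simp only [Lam.lift]
    rw [lift_subst_ge t s (Nat.zero_le k)]
    exact Beta.beta _ _
  | appL t _ ih => exact Beta.appL _ (ih k)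
  | appR s _ ih => exact Beta.appR _ (ih k)
  | abs _ ih => exact Beta.abs (ih (k+1))

theorem Beta.substL {t t' : Lam} (h : Beta t t') (k : Nat) (u : Lam) :
    Beta (subst t k u) (subst t' k u) := by
  induction h generalizing k u with
  | beta t s =>
    simp only [Lam.subst]
    rw [subst_subst t s u (Nat.zero_le k)]
    exact Beta.beta _ _
  | appL t _ ih => exact Beta.appL _ (ih k u)
  | appR s _ ih => exact Beta.appR _ (ih k u)
  | abs _ ih => exact Beta.abs (ih (k+1) _)

theorem Betas.appL {s s' : Lam} (t : Lam) (h : Betas s s') : Betas (app s t) (app s' t) :=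
  Relation.ReflTransGen.lift (fun x => app x t) (fun _ _ h => Beta.appL t h) _ _ h

theorem Betas.appR (s : Lam) {t t' : Lam} (h : Betas t t') : Betas (app s t) (app s t') :=
  Relation.ReflTransGen.lift (fun x => app s x) (fun _ _ h => Beta.appR s h) _ _ h

theorem Betas.app {s s' t t' : Lam} (hs : Betas s s') (ht : Betas t t') :
    Betas (app s t) (app s' t') := (Betas.appL t hs).trans (Betas.appR s' ht)

theorem Betas.abs {t t' : Lam} (h : Betas t t') : Betas (Lam.abs t) (Lam.abs t') :=
  Relation.ReflTransGen.lift Lam.abs (fun _ _ h => Beta.abs h) _ _ h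

theorem Betas.lift {t t' : Lam} (h : Betas t t') (k : Nat) :
    Betas (Lam.lift t k) (Lam.lift t' k) :=
  Relation.ReflTransGen.lift (fun x => Lam.lift x k) (fun _ _ (h : Beta _ _) => h.lift k) _ _ h

theorem Betas.substR (t : Lam) {u u' : Lam} (h : Betas u u') (k : Nat) :
    Betas (subst t k u) (subst t k u') := by
  induction t generalizing u u' k with
  | var n =>
    simp only [subst]
    split_ifs <;> first | exact Relation.ReflTransGen.refl | exact h
  | app s t ihs iht => exact Betas.app (ihs h k) (iht h k)
  | abs t ih => exact Betas.abs (ih (h.lift 0) (k+1))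

theorem Betas.subst {t t' u u' : Lam} (ht : Betas t t') (hu : Betas u u') (k : Nat) :
    Betas (subst t k u) (subst t' k u') :=
  (Relation.ReflTransGen.lift (fun x => Lam.subst x k u)
    (fun _ _ (h : Beta _ _) => h.substL k u) _ _ ht).trans (Betas.substR t' hu k)

theorem app_betas_appBeta (s t : Lam) : Betas (app s t) (appBeta s t) := by
  cases s with
  | var n => exact Relation.ReflTransGen.refl
  | app a b => exact Relation.ReflTransGen.refl
  | abs u => exact Relation.ReflTransGen.single (Beta.beta u t)

theorem Betas.appBeta {s s' t t' : Lam} (hs : Betas s s') (ht : Betas t t') :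
    Betas (appBeta s t) (appBeta s' t') := by
  cases s with
  | abs u =>
    -- s' must be an abs
    have : ∃ u', s' = Lam.abs u' ∧ Betas u u' := by
      clear ht
      generalize hgen : Lam.abs u = x at hs
      induction hs generalizing u with
      | refl => exact ⟨u, hgen.symm, Relation.ReflTransGen.refl⟩
      | tail _ hstep ih =>
        obtain ⟨w, rfl, hw⟩ := ih _ hgen
        cases hstep with
        | abs h' => exact ⟨_, rfl, hw.tail h'⟩
    obtain ⟨u', rfl, hu⟩ := this
    exact Betas.subst hu ht 0
  | var n =>
    exact ((Betas.app hs ht).trans (app_betas_appBeta s' t') : Betas (Lam.app (var n) t) _)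
  | app a b =>
    exact ((Betas.app hs ht).trans (app_betas_appBeta s' t'))

theorem betas_dev (t : Lam) : Betas t (dev t) := by
  induction t with
  | var n => exact Relation.ReflTransGen.refl
  | app s t ihs iht => exact (Betas.app ihs iht).trans (app_betas_appBeta _ _)
  | abs t ih => exact Betas.abs ih

theorem dev_lift (t : Lam) : ∀ k, dev (Lam.lift t k) = Lam.lift (dev t) k := by
  induction t with
  | var n => intro k; simp only [Lam.lift, dev]; split_ifs <;> rfl
  | abs t ih => intro k; simp only [Lam.lift, dev, ih]
  | app s t ihs iht =>
    intro k
    simp only [Lam.lift, dev, ihs, iht]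
    cases hs : dev s with
    | abs u => simp only [appBeta, Lam.lift, lift_subst_ge u (dev t) (Nat.zero_le k)]
    | var n => simp only [appBeta, Lam.lift]; split_ifs <;> rfl
    | app a b => simp only [appBeta, Lam.lift]

theorem subst_dev_betas (t u : Lam) : ∀ k, Betas (subst (dev t) k (dev u)) (dev (subst t k u)) := by
  induction t generalizing u with
  | var n =>
    intro k
    simp only [dev, subst]
    split_ifs <;> exact Relation.ReflTransGen.refl
  | abs t ih =>
    intro k
    simp only [dev, subst]
    refine Betas.abs ?_
    rw [← dev_lift u 0]
    exact ih (Lam.lift u 0) (k+1)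
  | app s t ihs iht =>
    intro k
    simp only [dev, subst]
    refine Relation.ReflTransGen.trans ?_ (Betas.appBeta (ihs u k) (iht u k))
    cases hs : dev s with
    | abs w =>
      simp only [appBeta, subst_subst w (dev t) (dev u) (Nat.zero_le k)]
      exact Relation.ReflTransGen.refl
    | var n =>
      simp only [appBeta, subst]
      split_ifs <;> exact app_betas_appBeta _ _
    | app a b => exact app_betas_appBeta _ _

theorem dev_mono {t t' : Lam} (h : Beta t t') : Betas (dev t) (dev t') := by
  induction h with
  | beta t s => exact subst_dev_betas t s 0
  | appL t _ ih => exact Betas.appBeta ih (Relation.ReflTransGen.refl)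
  | appR s _ ih => exact Betas.appBeta (Relation.ReflTransGen.refl) ih
  | abs _ ih => exact Betas.abs ih

theorem z_property {t t' : Lam} (h : Beta t t') : Betas t' (dev t) ∧ Betas (dev t) (dev t') := by
  refine ⟨?_, dev_mono h⟩
  induction h with
  | beta t s => exact Betas.subst (betas_dev t) (betas_dev s) 0
  | appL t _ ih => exact (Betas.app ih (betas_dev t)).trans (app_betas_appBeta _ _)
  | appR s _ ih => exact (Betas.app (betas_dev s) ih).trans (app_betas_appBeta _ _)
  | abs _ ih => exact Betas.abs ih

theorem dev_monos {t t' : Lam} (h : Betas t t') : Betas (dev t) (dev t') := by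
  induction h with
  | refl => exact Relation.ReflTransGen.refl
  | tail _ hstep ih => exact ih.trans (dev_mono hstep)

theorem strip {a b c : Lam} (hab : Beta a b) (hac : Betas a c) :
    Betas b (dev c) ∧ Betas c (dev c) := by
  refine ⟨?_, betas_dev c⟩
  exact ((z_property hab).1.trans (dev_monos hac))

end Lam

theorem beta_confluent {a b c : Lam} (hb : Lam.Betas a b) (hc : Lam.Betas a c) :
    ∃ d, Lam.Betas b d ∧ Lam.Betas c d := by
  induction hb with
  | refl => exact ⟨c, hc, Relation.ReflTransGen.refl⟩
  | tail hab hstep ih =>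
    obtain ⟨d, hbd, hcd⟩ := ih
    obtain ⟨h1, h2⟩ := Lam.strip hstep hbd
    exact ⟨Lam.dev d, h1, hcd.trans h2⟩
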